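/- Reduction of the majority-optimality condition to a λ-inequality: fix an integer n ≥ 1 and λ > 0. For μ, p_0, p_1 ∈ [0,1] with μ·p_1 + (1−μ)·p_0 > 0, set p = μp_1/(μp_1 + (1−μ)p_0), q_0 = (1−p_0)·ψ_λ(0) + p_0·ψ_λ(p), and q_1 = (1−p_1)·ψ_λ(1) + p_1·ψ_λ(p). Then the following two conditions are equivalent: (A) for all μ, p_0, p_1 ∈ [0,1], μ·(q_1(1−q_1))^{⌊(n−1)/2⌋}(1−2q_1) ≤ (1−μ)·(q_0(1−q_0))^{⌊(n−1)/2⌋}(1−2q_0); (B) for all q_0, q_1 with ψ_λ(0) < q_0 ≤ q_1 ≤ 1/2, (q_1(1−q_1))^{⌊(n−1)/2⌋}(1−2q_1)/(ψ_λ(1) − q_1) ≤ (q_0(1−q_0))^{⌊(n−1)/2⌋}(1−2q_0)/(ψ_λ(1) − q_0) · (2λ + ln(1−q_0) − ln q_0)/(2λ − ln(1−q_0) + ln q_0). -/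

import Mathlib

open Real

/-- Quantal response function `ψ_λ(p) = 1/(1 + exp(2λ(1−2p)))`. -/
noncomputable def psi (lam p : ℝ) : ℝ := 1 / (1 + Real.exp (2 * lam * (1 - 2 * p)))

/-- `p = μp₁/(μp₁ + (1−μ)p₀)`. -/
noncomputable def pPost (μ p0 p1 : ℝ) : ℝ := μ * p1 / (μ * p1 + (1 - μ) * p0)

/-- `q₀ = (1−p₀)·ψ_λ(0) + p₀·ψ_λ(p)`. -/
noncomputable def q0Of (lam μ p0 p1 : ℝ) : ℝ :=
  (1 - p0) * psi lam 0 + p0 * psi lam (pPost μ p0 p1)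

/-- `q₁ = (1−p₁)·ψ_λ(1) + p₁·ψ_λ(p)`. -/
noncomputable def q1Of (lam μ p0 p1 : ℝ) : ℝ :=
  (1 - p1) * psi lam 1 + p1 * psi lam (pPost μ p0 p1)

lemma convexOn_sinh : ConvexOn ℝ (Set.Ici (0:ℝ)) Real.sinh := by
  refine convexOn_of_hasDerivWithinAt2_nonneg (convex_Ici 0)
    Real.continuous_sinh.continuousOn
    (f' := Real.cosh) (f'' := Real.sinh)
    (fun x _ => (Real.hasDerivAt_sinh x).hasDerivWithinAt)
    (fun x _ => (Real.hasDerivAt_cosh x).hasDerivWithinAt) ?_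
  intro x hx
  rw [interior_Ici] at hx
  exact (Real.sinh_pos_iff.2 hx).le

lemma key_sinh {x y : ℝ} (hx : 0 ≤ x) (hxy : x ≤ y) :
    y * Real.sinh x ≤ x * Real.sinh y := by
  rcases eq_or_lt_of_le (hx.trans hxy) with hy | hy
  · have hx0 : x = 0 := le_antisymm (hxy.trans hy.symm.le) hx
    simp [← hy, hx0]
  · have h1 : (1 - x / y) • (0:ℝ) + (x / y) • y = x := by
      simp only [smul_eq_mul, mul_zero, zero_add]; exact div_mul_cancel₀ x hy.ne'
    have h := convexOn_sinh.2 (Set.self_mem_Ici) (Set.mem_Ici.2 (hx.trans hxy))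
      (by
        have : x / y ≤ 1 := (div_le_one hy).2 hxy
        linarith : (0:ℝ) ≤ 1 - x / y) (div_nonneg hx hy.le) (by ring)
    rw [h1] at h
    simp only [smul_eq_mul, Real.sinh_zero, mul_zero, zero_add] at h
    calc y * Real.sinh x ≤ y * (x / y * Real.sinh y) := by
          exact mul_le_mul_of_nonneg_left h hy.le
      _ = x * Real.sinh y := by field_simp

lemma one_add_exp_pos (x : ℝ) : 0 < 1 + Real.exp x := by positivity

lemma psi_pos (lam p : ℝ) : 0 < psi lam p := by
  unfold psi; positivity

lemma psi_lt_one (lam p : ℝ) : psi lam p < 1 := by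
  unfold psi
  rw [div_lt_one (one_add_exp_pos _)]
  linarith [Real.exp_pos (2 * lam * (1 - 2 * p))]

lemma psi_strictMono {lam : ℝ} (hlam : 0 < lam) : StrictMono (psi lam) := by
  intro p p' h
  unfold psi
  apply div_lt_div_of_pos_left one_pos (one_add_exp_pos _)
  have : 2 * lam * (1 - 2 * p') < 2 * lam * (1 - 2 * p) := by nlinarith
  linarith [Real.exp_lt_exp.2 this]

lemma psi_one_eq (lam : ℝ) : psi lam 1 = 1 - psi lam 0 := by
  unfold psi
  rw [Real.exp_eq_exp.mpr (by ring : 2 * lam * (1 - 2 * 1) = -(2 * lam * (1 - 2 * 0))),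
    Real.exp_neg]
  have h := (one_add_exp_pos (2 * lam * (1 - 2 * 0))).ne'
  have h2 := (Real.exp_pos (2 * lam * (1 - 2 * 0))).ne'
  field_simp
  ring

lemma psi_zero_lt_half {lam : ℝ} (hlam : 0 < lam) : psi lam 0 < 1 / 2 := by
  unfold psi
  rw [div_lt_div_iff₀ (one_add_exp_pos _) two_pos]
  have : (1:ℝ) < Real.exp (2 * lam * (1 - 2 * 0)) := by
    rw [Real.one_lt_exp_iff]; positivity
  linarith

lemma half_lt_psi_one {lam : ℝ} (hlam : 0 < lam) : 1 / 2 < psi lam 1 := by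
  rw [psi_one_eq]; linarith [psi_zero_lt_half hlam]

/-- the "t" of s = psi lam p -/
lemma log_ratio_psi (lam p : ℝ) :
    Real.log (1 - psi lam p) - Real.log (psi lam p) = 2 * lam * (1 - 2 * p) := by
  set c := 2 * lam * (1 - 2 * p)
  have hE := Real.exp_pos c
  have h1 : 1 - psi lam p = Real.exp c / (1 + Real.exp c) := by
    show 1 - 1 / (1 + Real.exp c) = Real.exp c / (1 + Real.exp c)
    rw [eq_div_iff (one_add_exp_pos c).ne', sub_mul, one_div_mul_cancel (one_add_exp_pos c).ne']
    ring
  have h2 : (psi lam p : ℝ) = 1 / (1 + Real.exp c) := rfl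
  rw [h1, h2, Real.log_div hE.ne' (one_add_exp_pos c).ne',
    Real.log_div one_ne_zero (one_add_exp_pos c).ne', Real.log_exp, Real.log_one]
  ring

/-- inverse: psi lam ((2λ - t)/(4λ)) = x where t = log(1-x) - log x -/
lemma psi_inv {lam x : ℝ} (hlam : 0 < lam) (hx0 : 0 < x) (hx1 : x < 1) :
    psi lam ((2 * lam - (Real.log (1 - x) - Real.log x)) / (4 * lam)) = x := by
  unfold psi
  have harg : 2 * lam * (1 - 2 * ((2 * lam - (Real.log (1 - x) - Real.log x)) / (4 * lam)))
      = Real.log (1 - x) - Real.log x := by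
    field_simp; ring
  rw [harg, Real.exp_sub, Real.exp_log (by linarith), Real.exp_log hx0]
  field_simp; ring

/-- The key ratio identity: (x - ψ0) * sinh((a+u)/2) = (ψ1 - x) * sinh((a-u)/2). -/
lemma ratio_identity {lam x : ℝ} (hlam : 0 < lam) (hx0 : 0 < x) (hx1 : x < 1) :
    (x - psi lam 0) * Real.sinh ((2 * lam + (Real.log (1 - x) - Real.log x)) / 2)
      = (psi lam 1 - x) * Real.sinh ((2 * lam - (Real.log (1 - x) - Real.log x)) / 2) := by
  set u := Real.log (1 - x) - Real.log x with hu
  set A := Real.exp lam with hA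
  set U := Real.exp (u / 2) with hU
  have hApos : 0 < A := Real.exp_pos _
  have hUpos : 0 < U := Real.exp_pos _
  have hU2 : U ^ 2 = (1 - x) / x := by
    rw [hU, ← Real.exp_nat_mul]
    push_cast
    rw [show (2:ℝ) * (u / 2) = u by ring, hu, Real.exp_sub,
      Real.exp_log (by linarith), Real.exp_log hx0]
  have hA2 : A ^ 2 = Real.exp (2 * lam) := by
    rw [hA, ← Real.exp_nat_mul]; push_cast; ring_nf
  have hx : x = 1 / (1 + U ^ 2) := by
    rw [hU2]; field_simp; ring
  have hpsi0 : psi lam 0 = 1 / (1 + A ^ 2) := by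
    unfold psi; rw [hA2]; norm_num
  have hpsi1 : psi lam 1 = A ^ 2 / (1 + A ^ 2) := by
    unfold psi
    rw [show 2 * lam * (1 - 2 * 1) = -(2*lam) by ring, Real.exp_neg, ← hA2]
    field_simp
    ring
  have hs1 : Real.sinh ((2 * lam + u) / 2) = (A * U - 1 / (A * U)) / 2 := by
    rw [Real.sinh_eq, show (2 * lam + u)/2 = lam + u/2 by ring, Real.exp_add,
      show -(lam + u/2) = -lam + -(u/2) by ring, Real.exp_add, Real.exp_neg, Real.exp_neg,
      ← hA, ← hU]
    field_simp
  have hs2 : Real.sinh ((2 * lam - u) / 2) = (A / U - U / A) / 2 := by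
    rw [Real.sinh_eq, show (2 * lam - u)/2 = lam + -(u/2) by ring, Real.exp_add,
      show -(lam + -(u/2)) = -lam + u/2 by ring, Real.exp_add, Real.exp_neg, Real.exp_neg,
      ← hA, ← hU]
    field_simp
  rw [hs1, hs2, hx, hpsi0, hpsi1]
  have h1 : (1 + U ^ 2) ≠ 0 := by positivity
  have h2 : (1 + A ^ 2) ≠ 0 := by positivity
  field_simp
  ring

lemma psi_zero_eq (lam : ℝ) : psi lam 0 = 1 / (1 + Real.exp (2 * lam)) := by
  unfold psi; norm_num

lemma sinh_prod_mono {x1 y1 x2 y2 : ℝ} (hx1 : 0 < x1) (h1 : x1 ≤ y1) (hx2 : 0 < x2)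
    (h2 : x2 ≤ y2) :
    (y1 * Real.sinh x1) * (y2 * Real.sinh x2) ≤ (x1 * Real.sinh y1) * (x2 * Real.sinh y2) := by
  have k1 := key_sinh hx1.le h1
  have k2 := key_sinh hx2.le h2
  have n1 : 0 ≤ y2 * Real.sinh x2 :=
    mul_nonneg (by linarith) (Real.sinh_nonneg_iff.2 hx2.le)
  have n2 : 0 ≤ x1 * Real.sinh y1 :=
    mul_nonneg hx1.le (Real.sinh_nonneg_iff.2 (hx1.le.trans h1))
  exact mul_le_mul k1 k2 n1 n2

lemma t0_lt {lam x : ℝ} (hlam : 0 < lam) (hx : psi lam 0 < x) (hx1 : x < 1) :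
    Real.log (1 - x) - Real.log x < 2 * lam := by
  have hx0 : 0 < x := lt_trans (psi_pos lam 0) hx
  have hE : (1 - x) / x < Real.exp (2 * lam) := by
    rw [psi_zero_eq, div_lt_iff₀ (one_add_exp_pos _)] at hx
    rw [div_lt_iff₀ hx0]
    nlinarith [Real.exp_pos (2 * lam)]
  have := Real.log_lt_log (div_pos (by linarith) hx0) hE
  rwa [Real.log_exp, Real.log_div (by linarith) hx0.ne'] at this

/-- the (***) inequality: monotonicity of g. -/
lemma star_ineq {lam x s : ℝ} (hlam : 0 < lam) (hx : psi lam 0 < x) (hxs : x ≤ s)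
    (hs : s ≤ 1 / 2) :
    (2 * lam + (Real.log (1 - x) - Real.log x)) * (x - psi lam 0) *
        ((psi lam 1 - s) * (2 * lam - (Real.log (1 - s) - Real.log s))) ≤
      (psi lam 1 - x) * (2 * lam - (Real.log (1 - x) - Real.log x)) *
        ((s - psi lam 0) * (2 * lam + (Real.log (1 - s) - Real.log s))) := by
  have hψ0 := psi_pos lam 0
  have hx0 : 0 < x := lt_trans hψ0 hx
  have hs0 : 0 < s := lt_of_lt_of_le hx0 hxs
  have hx1 : x < 1 := by linarith
  have hs1 : s < 1 := by linarith
  set t0 := Real.log (1 - x) - Real.log x with ht0def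
  set t := Real.log (1 - s) - Real.log s with htdef
  have ht0a : t0 < 2 * lam := t0_lt hlam hx hx1
  have ht_nonneg : 0 ≤ t := by
    have := Real.log_le_log hs0 (by linarith : s ≤ 1 - s)
    linarith
  have htt0 : t ≤ t0 := by
    have h1 := Real.log_le_log hx0 hxs
    have h2 := Real.log_le_log (by linarith : (0:ℝ) < 1 - s) (by linarith : 1 - s ≤ 1 - x)
    linarith
  -- abbreviations
  set x1 := (2 * lam - t0) / 2 with hx1def
  set y1 := (2 * lam - t) / 2 with hy1def
  set x2 := (2 * lam + t) / 2 with hx2def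
  set y2 := (2 * lam + t0) / 2 with hy2def
  have hx1pos : 0 < x1 := by rw [hx1def]; linarith
  have hx2pos : 0 < x2 := by rw [hx2def]; linarith
  have h11 : x1 ≤ y1 := by rw [hx1def, hy1def]; linarith
  have h22 : x2 ≤ y2 := by rw [hx2def, hy2def]; linarith
  have hS1 : 0 < Real.sinh y1 := Real.sinh_pos_iff.2 (lt_of_lt_of_le hx1pos h11)
  have hS2 : 0 < Real.sinh y2 := Real.sinh_pos_iff.2 (lt_of_lt_of_le hx2pos h22)
  have id1 : (x - psi lam 0) * Real.sinh y2 = (psi lam 1 - x) * Real.sinh x1 := by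
    have := ratio_identity hlam hx0 hx1 (lam := lam)
    rw [← ht0def] at this
    rw [hy2def, hx1def]
    convert this using 3 <;> ring
  have id2 : (s - psi lam 0) * Real.sinh x2 = (psi lam 1 - s) * Real.sinh y1 := by
    have := ratio_identity hlam hs0 hs1 (lam := lam)
    rw [← htdef] at this
    rw [hx2def, hy1def]
    convert this using 3 <;> ring
  have hψ1s : 0 < psi lam 1 - s := by linarith [half_lt_psi_one hlam]
  have hψ1x : 0 < psi lam 1 - x := by linarith [half_lt_psi_one hlam]
  have hsψ0 : 0 < s - psi lam 0 := by linarith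
  have H := sinh_prod_mono hx1pos h11 hx2pos h22
  have hc : (0:ℝ) ≤ 4 * (psi lam 1 - x) * (s - psi lam 0) := by positivity
  have H2 := mul_le_mul_of_nonneg_left H hc
  have e1 : (2 * lam + t0) * (x - psi lam 0) * ((psi lam 1 - s) * (2 * lam - t)) *
      (Real.sinh y1 * Real.sinh y2)
      = 4 * (psi lam 1 - x) * (s - psi lam 0) *
        ((y1 * Real.sinh x1) * (y2 * Real.sinh x2)) := by
    have e2lam0 : 2 * lam + t0 = 2 * y2 := by rw [hy2def]; ring
    have e2lam1 : 2 * lam - t = 2 * y1 := by rw [hy1def]; ring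
    rw [e2lam0, e2lam1]
    linear_combination (4 * y1 * y2 * (psi lam 1 - s) * Real.sinh y1) * id1
      - (4 * y1 * y2 * (psi lam 1 - x) * Real.sinh x1) * id2
  have e2 : (psi lam 1 - x) * (2 * lam - t0) * ((s - psi lam 0) * (2 * lam + t)) *
      (Real.sinh y1 * Real.sinh y2)
      = 4 * (psi lam 1 - x) * (s - psi lam 0) *
        ((x1 * Real.sinh y1) * (x2 * Real.sinh y2)) := by
    rw [hx1def, hx2def]; ring
  have final : (2 * lam + t0) * (x - psi lam 0) * ((psi lam 1 - s) * (2 * lam - t)) *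
      (Real.sinh y1 * Real.sinh y2)
      ≤ (psi lam 1 - x) * (2 * lam - t0) * ((s - psi lam 0) * (2 * lam + t)) *
      (Real.sinh y1 * Real.sinh y2) := by
    rw [e1, e2]; exact H2
  exact le_of_mul_le_mul_right final (by positivity)

lemma forward_dir {lam : ℝ} (hlam : 0 < lam) (m : ℕ)
    (hA : ∀ μ p0 p1 : ℝ, μ ∈ Set.Icc (0 : ℝ) 1 → p0 ∈ Set.Icc (0 : ℝ) 1 →
        p1 ∈ Set.Icc (0 : ℝ) 1 → 0 < μ * p1 + (1 - μ) * p0 →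
        μ * (q1Of lam μ p0 p1 * (1 - q1Of lam μ p0 p1)) ^ m *
            (1 - 2 * q1Of lam μ p0 p1) ≤
          (1 - μ) * (q0Of lam μ p0 p1 * (1 - q0Of lam μ p0 p1)) ^ m *
            (1 - 2 * q0Of lam μ p0 p1)) :
    ∀ q0 q1 : ℝ, psi lam 0 < q0 → q0 ≤ q1 → q1 ≤ 1 / 2 →
        (q1 * (1 - q1)) ^ m * (1 - 2 * q1) / (psi lam 1 - q1) ≤
          (q0 * (1 - q0)) ^ m * (1 - 2 * q0) / (psi lam 1 - q0) *
            ((2 * lam + Real.log (1 - q0) - Real.log q0) /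
              (2 * lam - Real.log (1 - q0) + Real.log q0)) := by
  intro q0 q1 hq0 h01 hq1
  have hψ0 := psi_pos lam 0
  have hψ1 := half_lt_psi_one hlam
  have hq0pos : 0 < q0 := lt_trans hψ0 hq0
  have hq0half : q0 ≤ 1 / 2 := le_trans h01 hq1
  have hq0lt1 : q0 < 1 := by linarith
  rw [show 2 * lam + Real.log (1 - q0) - Real.log q0
      = 2 * lam + (Real.log (1 - q0) - Real.log q0) by ring,
    show 2 * lam - Real.log (1 - q0) + Real.log q0
      = 2 * lam - (Real.log (1 - q0) - Real.log q0) by ring]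
  set t0 := Real.log (1 - q0) - Real.log q0 with ht0def
  have ht0nn : 0 ≤ t0 := by
    have := Real.log_le_log hq0pos (by linarith : q0 ≤ 1 - q0)
    rw [ht0def]; linarith
  have ht0a : t0 < 2 * lam := t0_lt hlam hq0 hq0lt1
  set p := (2 * lam - t0) / (4 * lam) with hpdef
  have hp : psi lam p = q0 := psi_inv hlam hq0pos hq0lt1
  have hppos : 0 < p := by rw [hpdef]; exact div_pos (by linarith) (by positivity)
  have hp1m : 1 - p = (2 * lam + t0) / (4 * lam) := by rw [hpdef]; field_simp; ring
  have hplt1 : p < 1 := by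
    rw [hpdef, div_lt_one (by positivity)]; linarith
  have hψ1q1 : 0 < psi lam 1 - q1 := by linarith
  have hψ1q0 : 0 < psi lam 1 - q0 := by linarith
  set p1 := (psi lam 1 - q1) / (psi lam 1 - q0) with hp1def
  have hp1pos : 0 < p1 := div_pos hψ1q1 hψ1q0
  have hp1le1 : p1 ≤ 1 := by
    rw [hp1def, div_le_one hψ1q0]; linarith
  set E := p + p1 * (1 - p) with hEdef
  have hEpos : 0 < E := by
    have : 0 ≤ p1 * (1 - p) := mul_nonneg hp1pos.le (by linarith)
    rw [hEdef]; linarith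
  set μ := p / E with hμdef
  have hμpos : 0 < μ := div_pos hppos hEpos
  have hμlt1 : μ < 1 := by
    rw [hμdef, div_lt_one hEpos, hEdef]
    nlinarith
  have hD : 0 < μ * p1 + (1 - μ) * 1 := by nlinarith
  have hDval : μ * p1 + (1 - μ) * 1 = p1 / E := by
    rw [hμdef]; field_simp; rw [hEdef]; ring
  have hpPost : pPost μ 1 p1 = p := by
    unfold pPost
    rw [hDval, hμdef]
    field_simp
  have hq0Of : q0Of lam μ 1 p1 = q0 := by
    unfold q0Of
    rw [hpPost, hp]; ring
  have hq1Of : q1Of lam μ 1 p1 = q1 := by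
    unfold q1Of
    rw [hpPost, hp, hp1def]
    field_simp
    ring
  have h := hA μ 1 p1 ⟨hμpos.le, hμlt1.le⟩ ⟨zero_le_one, le_refl 1⟩ ⟨hp1pos.le, hp1le1⟩ hD
  rw [hq0Of, hq1Of] at h
  have h1E : (1 - μ) * E = p1 * (1 - p) := by
    rw [hμdef]; field_simp [hEdef]; rw [hEdef]; ring
  have idμ : μ * (4 * lam * E) = 2 * lam - t0 := by
    rw [hμdef, hpdef]; field_simp
  have id1μ : (1 - μ) * (4 * lam * E) * (psi lam 1 - q0) = (2 * lam + t0) * (psi lam 1 - q1) := by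
    calc (1 - μ) * (4 * lam * E) * (psi lam 1 - q0)
        = 4 * lam * ((1 - μ) * E) * (psi lam 1 - q0) := by ring
      _ = 4 * lam * (p1 * (1 - p)) * (psi lam 1 - q0) := by rw [h1E]
      _ = (2 * lam + t0) * (psi lam 1 - q1) := by
          rw [hp1m, hp1def]; field_simp
  have step := mul_le_mul_of_nonneg_right h
    (le_of_lt (by positivity : (0:ℝ) < 4 * lam * E * (psi lam 1 - q0)))
  rw [div_mul_div_comm, div_le_div_iff₀ hψ1q1
    (mul_pos hψ1q0 (by linarith))]
  have e1 : μ * (q1 * (1 - q1)) ^ m * (1 - 2 * q1) * (4 * lam * E * (psi lam 1 - q0))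
      = (q1 * (1 - q1)) ^ m * (1 - 2 * q1) * ((psi lam 1 - q0) * (2 * lam - t0)) := by
    linear_combination ((q1 * (1 - q1)) ^ m * (1 - 2 * q1) * (psi lam 1 - q0)) * idμ
  have e2 : (1 - μ) * (q0 * (1 - q0)) ^ m * (1 - 2 * q0) * (4 * lam * E * (psi lam 1 - q0))
      = (q0 * (1 - q0)) ^ m * (1 - 2 * q0) * (2 * lam + t0) * (psi lam 1 - q1) := by
    linear_combination ((q0 * (1 - q0)) ^ m * (1 - 2 * q0)) * id1μ
  linarith [step, e1, e2]

lemma pPost_mem {μ p0 p1 : ℝ} (hμ : μ ∈ Set.Icc (0:ℝ) 1) (hp0 : p0 ∈ Set.Icc (0:ℝ) 1)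
    (hp1 : p1 ∈ Set.Icc (0:ℝ) 1) (hD : 0 < μ * p1 + (1 - μ) * p0) :
    pPost μ p0 p1 ∈ Set.Icc (0:ℝ) 1 := by
  obtain ⟨h1, h2⟩ := hμ; obtain ⟨h3, h4⟩ := hp0; obtain ⟨h5, h6⟩ := hp1
  unfold pPost
  constructor
  · positivity
  · rw [div_le_one hD]; nlinarith

set_option maxHeartbeats 800000 in
lemma core_back {lam : ℝ} (hlam : 0 < lam) (m : ℕ)
    (hB : ∀ q0 q1 : ℝ, psi lam 0 < q0 → q0 ≤ q1 → q1 ≤ 1 / 2 →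
        (q1 * (1 - q1)) ^ m * (1 - 2 * q1) / (psi lam 1 - q1) ≤
          (q0 * (1 - q0)) ^ m * (1 - 2 * q0) / (psi lam 1 - q0) *
            ((2 * lam + Real.log (1 - q0) - Real.log q0) /
              (2 * lam - Real.log (1 - q0) + Real.log q0))) :
    ∀ μ p0 p1 : ℝ, μ ∈ Set.Icc (0 : ℝ) 1 → p0 ∈ Set.Icc (0 : ℝ) 1 →
        p1 ∈ Set.Icc (0 : ℝ) 1 → 0 < μ * p1 + (1 - μ) * p0 →
        q1Of lam μ p0 p1 ≤ 1 / 2 →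
        μ * (q1Of lam μ p0 p1 * (1 - q1Of lam μ p0 p1)) ^ m *
            (1 - 2 * q1Of lam μ p0 p1) ≤
          (1 - μ) * (q0Of lam μ p0 p1 * (1 - q0Of lam μ p0 p1)) ^ m *
            (1 - 2 * q0Of lam μ p0 p1) := by
  intro μ p0 p1 hμ hp0 hp1 hD hq1half
  obtain ⟨hμ0, hμ1⟩ := hμ
  obtain ⟨hp00, hp01⟩ := hp0
  obtain ⟨hp10, hp11⟩ := hp1
  have hψ0 := psi_pos lam 0
  have hψ0h := psi_zero_lt_half hlam
  have hψ1h := half_lt_psi_one hlam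
  have hψ1lt1 := psi_lt_one lam 1
  obtain ⟨hP0, hP1⟩ := pPost_mem ⟨hμ0, hμ1⟩ ⟨hp00, hp01⟩ ⟨hp10, hp11⟩ hD
  set P := pPost μ p0 p1 with hPdef
  set s := psi lam P with hsdef
  have hsψ0 : psi lam 0 ≤ s := (psi_strictMono hlam).monotone hP0
  have hsψ1 : s ≤ psi lam 1 := (psi_strictMono hlam).monotone hP1
  set q0 := q0Of lam μ p0 p1 with hq0def
  set q1 := q1Of lam μ p0 p1 with hq1def
  have hq0eq : q0 = (1 - p0) * psi lam 0 + p0 * s := rfl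
  have hq1eq : q1 = (1 - p1) * psi lam 1 + p1 * s := rfl
  clear_value P s q0 q1
  have hq0ψ0 : psi lam 0 ≤ q0 := by rw [hq0eq]; nlinarith
  have hq0s : q0 ≤ s := by rw [hq0eq]; nlinarith
  have hsq1 : s ≤ q1 := by rw [hq1eq]; nlinarith
  have hq1ψ1 : q1 ≤ psi lam 1 := by rw [hq1eq]; nlinarith
  have hshalf : s ≤ 1 / 2 := le_trans hsq1 hq1half
  have hq0half : q0 ≤ 1 / 2 := le_trans hq0s hshalf
  have hF0nn : 0 ≤ (q0 * (1 - q0)) ^ m * (1 - 2 * q0) := by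
    apply mul_nonneg (pow_nonneg (mul_nonneg (by linarith) (by linarith)) m)
    linarith
  rcases eq_or_lt_of_le hμ0 with hμz | hμpos
  · rw [← hμz]; simpa using hF0nn
  -- now μ > 0
  have hsltψ1 : s < psi lam 1 := lt_of_le_of_lt hsq1 (lt_of_le_of_lt hq1half hψ1h)
  have hp1pos : 0 < p1 := by
    rcases eq_or_lt_of_le hp10 with h | h
    · exfalso; rw [hq1eq, ← h] at hq1half; simp at hq1half; linarith
    · exact h
  have hμp1 : 0 < μ * p1 := mul_pos hμpos hp1pos
  have h1μp0 : 0 < (1 - μ) * p0 := by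
    by_contra hcon
    push_neg at hcon
    have h0 : (1 - μ) * p0 = 0 := le_antisymm hcon (mul_nonneg (by linarith) hp00)
    have hPeq : P = 1 := by
      rw [hPdef]; unfold pPost; rw [h0]
      have hμp1' : μ * p1 + 0 ≠ 0 := by simpa using hμp1.ne'
      rw [add_zero]; exact div_self hμp1.ne'
    rw [hsdef, hPeq] at hsltψ1
    exact lt_irrefl _ hsltψ1
  have hμlt1 : μ < 1 := by
    by_contra hc
    push_neg at hc
    have : (1 - μ) * p0 ≤ 0 := mul_nonpos_of_nonpos_of_nonneg (by linarith) hp00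
    linarith
  have hp0pos : 0 < p0 := by
    by_contra hc
    push_neg at hc
    have hp0z : p0 = 0 := le_antisymm hc hp00
    rw [hp0z] at h1μp0; simp at h1μp0
  have hPpos : 0 < P := by
    rw [hPdef]; unfold pPost; positivity
  have hPlt1 : P < 1 := by
    rw [hPdef]; unfold pPost
    rw [div_lt_one hD]; nlinarith
  have hsgtψ0 : psi lam 0 < s := by
    rw [hsdef]
    exact psi_strictMono hlam hPpos
  have hq0gt : psi lam 0 < q0 := by
    rw [hq0eq]
    have h := mul_pos hp0pos (sub_pos.2 hsgtψ0)
    linarith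
  have hq0lt1 : q0 < 1 := by linarith
  have hs0pos : 0 < s := lt_trans hψ0 hsgtψ0
  have hslt1 : s < 1 := by linarith
  have ht := log_ratio_psi lam P
  rw [← hsdef] at ht
  have hq01 : q0 ≤ q1 := le_trans hq0s hsq1
  have hBi := hB q0 q1 hq0gt hq01 hq1half
  rw [show 2 * lam + Real.log (1 - q0) - Real.log q0
      = 2 * lam + (Real.log (1 - q0) - Real.log q0) by ring,
    show 2 * lam - Real.log (1 - q0) + Real.log q0
      = 2 * lam - (Real.log (1 - q0) - Real.log q0) by ring,
    div_mul_div_comm] at hBi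
  have ht0a : Real.log (1 - q0) - Real.log q0 < 2 * lam := t0_lt hlam hq0gt hq0lt1
  have hta : Real.log (1 - s) - Real.log s < 2 * lam := t0_lt hlam hsgtψ0 hslt1
  have htnn : 0 ≤ Real.log (1 - s) - Real.log s := by
    have := Real.log_le_log hs0pos (by linarith : s ≤ 1 - s)
    linarith
  have hψ1q1 : 0 < psi lam 1 - q1 := by linarith
  have hψ1q0 : 0 < psi lam 1 - q0 := by linarith
  rw [div_le_div_iff₀ hψ1q1 (mul_pos hψ1q0 (by linarith))] at hBi
  have hstar := star_ineq hlam hq0gt hq0s hshalf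
  set t0 := Real.log (1 - q0) - Real.log q0 with ht0def
  set t := Real.log (1 - s) - Real.log s with htdef
  have hRnn : 0 ≤ (q0 - psi lam 0) * ((psi lam 1 - s) * (2 * lam - t)) :=
    mul_nonneg (by linarith) (mul_nonneg (by linarith) (by linarith))
  have h1 := mul_le_mul_of_nonneg_right hBi hRnn
  have hCnn : 0 ≤ (q0 * (1 - q0)) ^ m * (1 - 2 * q0) * (psi lam 1 - q1) :=
    mul_nonneg hF0nn hψ1q1.le
  have h2 := mul_le_mul_of_nonneg_left hstar hCnn
  have hss : (q1 * (1 - q1)) ^ m * (1 - 2 * q1) * ((q0 - psi lam 0) *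
        ((psi lam 1 - s) * (2 * lam - t))) * ((psi lam 1 - q0) * (2 * lam - t0)) ≤
      (q0 * (1 - q0)) ^ m * (1 - 2 * q0) * ((psi lam 1 - q1) *
        ((s - psi lam 0) * (2 * lam + t))) * ((psi lam 1 - q0) * (2 * lam - t0)) := by
    calc (q1 * (1 - q1)) ^ m * (1 - 2 * q1) * ((q0 - psi lam 0) *
        ((psi lam 1 - s) * (2 * lam - t))) * ((psi lam 1 - q0) * (2 * lam - t0))
        = (q1 * (1 - q1)) ^ m * (1 - 2 * q1) * ((psi lam 1 - q0) * (2 * lam - t0)) *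
          ((q0 - psi lam 0) * ((psi lam 1 - s) * (2 * lam - t))) := by ring
      _ ≤ (q0 * (1 - q0)) ^ m * (1 - 2 * q0) * (2 * lam + t0) * (psi lam 1 - q1) *
          ((q0 - psi lam 0) * ((psi lam 1 - s) * (2 * lam - t))) := h1
      _ = (q0 * (1 - q0)) ^ m * (1 - 2 * q0) * (psi lam 1 - q1) *
          ((2 * lam + t0) * (q0 - psi lam 0) * ((psi lam 1 - s) * (2 * lam - t))) := by ring
      _ ≤ (q0 * (1 - q0)) ^ m * (1 - 2 * q0) * (psi lam 1 - q1) *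
          ((psi lam 1 - q0) * (2 * lam - t0) * ((s - psi lam 0) * (2 * lam + t))) := h2
      _ = (q0 * (1 - q0)) ^ m * (1 - 2 * q0) * ((psi lam 1 - q1) *
          ((s - psi lam 0) * (2 * lam + t))) * ((psi lam 1 - q0) * (2 * lam - t0)) := by ring
  have hss' := le_of_mul_le_mul_right hss (mul_pos hψ1q0 (by linarith))
  have hpD : P * (μ * p1 + (1 - μ) * p0) = μ * p1 := by
    rw [hPdef]; unfold pPost; field_simp
  have e_rel : (1 - μ) * p0 * P = μ * p1 * (1 - P) := by linear_combination hpD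
  have e4p : 4 * lam * P = 2 * lam - t := by linear_combination ht
  have e4q : 4 * lam * (1 - P) = 2 * lam + t := by linear_combination -ht
  have e_p0 : p0 * (s - psi lam 0) = q0 - psi lam 0 := by rw [hq0eq]; ring
  have e_p1 : p1 * (psi lam 1 - s) = psi lam 1 - q1 := by rw [hq1eq]; ring
  set K := 4 * lam * (p0 * (P * ((s - psi lam 0) * (psi lam 1 - s)))) with hKdef
  have hKpos : 0 < K := by
    rw [hKdef]
    have hA : 0 < s - psi lam 0 := by linarith
    have hBB : 0 < psi lam 1 - s := by linarith
    positivity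
  have eL : μ * (q1 * (1 - q1)) ^ m * (1 - 2 * q1) * K
      = μ * ((q1 * (1 - q1)) ^ m * (1 - 2 * q1) * ((q0 - psi lam 0) *
          ((psi lam 1 - s) * (2 * lam - t)))) := by
    rw [hKdef]
    linear_combination (μ * ((q1 * (1 - q1)) ^ m * (1 - 2 * q1)) * (psi lam 1 - s)
        * (4 * lam * P)) * e_p0
      + (μ * ((q1 * (1 - q1)) ^ m * (1 - 2 * q1)) * (psi lam 1 - s) * (q0 - psi lam 0)) * e4p
  have eR : (1 - μ) * (q0 * (1 - q0)) ^ m * (1 - 2 * q0) * K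
      = μ * ((q0 * (1 - q0)) ^ m * (1 - 2 * q0) * ((psi lam 1 - q1) *
          ((s - psi lam 0) * (2 * lam + t)))) := by
    rw [hKdef]
    linear_combination ((q0 * (1 - q0)) ^ m * (1 - 2 * q0) * (4 * lam) * (s - psi lam 0)
        * (psi lam 1 - s)) * e_rel
      + (μ * ((q0 * (1 - q0)) ^ m * (1 - 2 * q0)) * (s - psi lam 0) * p1
        * (psi lam 1 - s)) * e4q
      + (μ * ((q0 * (1 - q0)) ^ m * (1 - 2 * q0)) * (s - psi lam 0) * (2 * lam + t)) * e_p1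
  have hfin := mul_le_mul_of_nonneg_left hss' hμpos.le
  rw [← eL, ← eR] at hfin
  exact le_of_mul_le_mul_right hfin hKpos


lemma psi_symm (lam p : ℝ) : psi lam (1 - p) = 1 - psi lam p := by
  unfold psi
  rw [show 2 * lam * (1 - 2 * (1 - p)) = -(2 * lam * (1 - 2 * p)) by ring, Real.exp_neg]
  have h1 := (one_add_exp_pos (2 * lam * (1 - 2 * p))).ne'
  have h2 := (Real.exp_pos (2 * lam * (1 - 2 * p))).ne'
  field_simp
  ring

lemma pPost_symm {μ p0 p1 : ℝ} (hD : 0 < μ * p1 + (1 - μ) * p0) :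
    pPost (1 - μ) p1 p0 = 1 - pPost μ p0 p1 := by
  unfold pPost
  rw [show (1 - μ) * p0 + (1 - (1 - μ)) * p1 = μ * p1 + (1 - μ) * p0 by ring]
  rw [eq_sub_iff_add_eq, ← add_div, div_eq_one_iff_eq hD.ne']; ring

lemma q0Of_symm {lam μ p0 p1 : ℝ} (hD : 0 < μ * p1 + (1 - μ) * p0) :
    q0Of lam (1 - μ) p1 p0 = 1 - q1Of lam μ p0 p1 := by
  unfold q0Of q1Of
  rw [pPost_symm hD, psi_symm, psi_one_eq]
  ring

lemma q1Of_symm {lam μ p0 p1 : ℝ} (hD : 0 < μ * p1 + (1 - μ) * p0) :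
    q1Of lam (1 - μ) p1 p0 = 1 - q0Of lam μ p0 p1 := by
  unfold q0Of q1Of
  rw [pPost_symm hD, psi_symm, psi_one_eq]
  ring


/-- **Reduction of the majority-optimality condition to a λ-inequality.** For `n ≥ 1` and
`λ > 0`, condition (A) — for all `μ, p₀, p₁ ∈ [0,1]` (with `μp₁ + (1−μ)p₀ > 0`),
`μ·(q₁(1−q₁))^⌊(n−1)/2⌋(1−2q₁) ≤ (1−μ)·(q₀(1−q₀))^⌊(n−1)/2⌋(1−2q₀)` — is equivalent to
condition (B) — for all `ψ_λ(0) < q₀ ≤ q₁ ≤ 1/2`,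
`(q₁(1−q₁))^⌊(n−1)/2⌋(1−2q₁)/(ψ_λ(1)−q₁) ≤ (q₀(1−q₀))^⌊(n−1)/2⌋(1−2q₀)/(ψ_λ(1)−q₀) ·
(2λ + ln(1−q₀) − ln q₀)/(2λ − ln(1−q₀) + ln q₀)`. -/
theorem reduction_to_lambda_inequality (n : ℕ) (hn : 1 ≤ n) (lam : ℝ) (hlam : 0 < lam) :
    (∀ μ p0 p1 : ℝ, μ ∈ Set.Icc (0 : ℝ) 1 → p0 ∈ Set.Icc (0 : ℝ) 1 →
        p1 ∈ Set.Icc (0 : ℝ) 1 → 0 < μ * p1 + (1 - μ) * p0 →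
        μ * (q1Of lam μ p0 p1 * (1 - q1Of lam μ p0 p1)) ^ ((n - 1) / 2) *
            (1 - 2 * q1Of lam μ p0 p1) ≤
          (1 - μ) * (q0Of lam μ p0 p1 * (1 - q0Of lam μ p0 p1)) ^ ((n - 1) / 2) *
            (1 - 2 * q0Of lam μ p0 p1)) ↔
      (∀ q0 q1 : ℝ, psi lam 0 < q0 → q0 ≤ q1 → q1 ≤ 1 / 2 →
        (q1 * (1 - q1)) ^ ((n - 1) / 2) * (1 - 2 * q1) / (psi lam 1 - q1) ≤
          (q0 * (1 - q0)) ^ ((n - 1) / 2) * (1 - 2 * q0) / (psi lam 1 - q0) *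
            ((2 * lam + Real.log (1 - q0) - Real.log q0) /
              (2 * lam - Real.log (1 - q0) + Real.log q0))) := by
  set m := (n - 1) / 2 with hm
  constructor
  · exact forward_dir hlam m
  · intro hB μ p0 p1 hμ hp0 hp1 hD
    by_cases h1 : q1Of lam μ p0 p1 ≤ 1 / 2
    · exact core_back hlam m hB μ p0 p1 hμ hp0 hp1 hD h1
    · push_neg at h1
      have hψ0 := psi_pos lam 0
      have hψ0h := psi_zero_lt_half hlam
      have hψ1h := half_lt_psi_one hlam
      have hψ1lt1 := psi_lt_one lam 1
      obtain ⟨hP0, hP1⟩ := pPost_mem hμ hp0 hp1 hD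
      have hsψ0 : psi lam 0 ≤ psi lam (pPost μ p0 p1) := (psi_strictMono hlam).monotone hP0
      have hsψ1 : psi lam (pPost μ p0 p1) ≤ psi lam 1 := (psi_strictMono hlam).monotone hP1
      obtain ⟨hμ0, hμ1⟩ := hμ
      obtain ⟨hp00, hp01⟩ := hp0
      obtain ⟨hp10, hp11⟩ := hp1
      have hq0ψ0 : psi lam 0 ≤ q0Of lam μ p0 p1 := by unfold q0Of; nlinarith
      have hq0s : q0Of lam μ p0 p1 ≤ psi lam (pPost μ p0 p1) := by unfold q0Of; nlinarith
      have hsq1 : psi lam (pPost μ p0 p1) ≤ q1Of lam μ p0 p1 := by unfold q1Of; nlinarith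
      have hq1ψ1 : q1Of lam μ p0 p1 ≤ psi lam 1 := by unfold q1Of; nlinarith
      by_cases h0 : 1 / 2 ≤ q0Of lam μ p0 p1
      · -- swap roles
        have hD' : 0 < (1 - μ) * p0 + (1 - (1 - μ)) * p1 := by
          rw [show (1 - μ) * p0 + (1 - (1 - μ)) * p1 = μ * p1 + (1 - μ) * p0 by ring]
          exact hD
        have hq1sw : q1Of lam (1 - μ) p1 p0 ≤ 1 / 2 := by
          rw [q1Of_symm hD]; linarith
        have hcore := core_back hlam m hB (1 - μ) p1 p0 ⟨by linarith, by linarith⟩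
          ⟨hp10, hp11⟩ ⟨hp00, hp01⟩ hD' hq1sw
        rw [q1Of_symm hD, q0Of_symm hD] at hcore
        have e1 : ((1 - q0Of lam μ p0 p1) * (1 - (1 - q0Of lam μ p0 p1))) ^ m
            = (q0Of lam μ p0 p1 * (1 - q0Of lam μ p0 p1)) ^ m := by ring_nf
        have e2 : ((1 - q1Of lam μ p0 p1) * (1 - (1 - q1Of lam μ p0 p1))) ^ m
            = (q1Of lam μ p0 p1 * (1 - q1Of lam μ p0 p1)) ^ m := by ring_nf
        rw [e1, e2] at hcore
        linarith [hcore]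
      · -- q0 < 1/2 < q1 : sign argument
        push_neg at h0
        have hL : μ * (q1Of lam μ p0 p1 * (1 - q1Of lam μ p0 p1)) ^ m *
            (1 - 2 * q1Of lam μ p0 p1) ≤ 0 := by
          apply mul_nonpos_of_nonneg_of_nonpos
          · apply mul_nonneg hμ0
            apply pow_nonneg
            apply mul_nonneg (by linarith) (by linarith)
          · linarith
        have hR : 0 ≤ (1 - μ) * (q0Of lam μ p0 p1 * (1 - q0Of lam μ p0 p1)) ^ m *
            (1 - 2 * q0Of lam μ p0 p1) := by
          apply mul_nonneg
          apply mul_nonneg (by linarith)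
          · apply pow_nonneg
            apply mul_nonneg (by linarith) (by linarith)
          · linarith
        linarith
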